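/- Let V : ℕ → ℝ and define for a fixed action a with step length L > 0, success probability p ∈ (0,1], absorbing reset value r, and uniformization constant ε ∈ (0, L], the state-action value Q(Δ, a) = Δ + (L-1)/2 + (ε/L)·p·V(r) + (ε/L)·(1-p)·V(Δ + L) + (1 - ε/L)·V(Δ). If V is concave (discrete increments non-increasing) and satisfies V(Δ₂) - V(Δ₁) ≥ (L/(ε p))·(Δ₂ - Δ₁) for all Δ₁ ≤ Δ₂, then Q(Δ₂, a) - Q(Δ₁, a) ≤ V(Δ₂) - V(Δ₁) for all Δ₁ ≤ Δ₂. -/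

import Mathlib

/-- Increments of a concave function are antitone. -/
lemma incr_antitone (V : ℕ → ℝ)
    (hconc : ∀ x : ℕ, V (x + 2) - V (x + 1) ≤ V (x + 1) - V x) :
    ∀ x y : ℕ, x ≤ y → V (y + 1) - V y ≤ V (x + 1) - V x := by
  intro x y hxy
  induction y, hxy using Nat.le_induction with
  | base => exact le_rfl
  | succ n hn ih =>
    calc V (n + 1 + 1) - V (n + 1) ≤ V (n + 1) - V n := hconc n
    _ ≤ V (x + 1) - V x := ih

/-- Shifted differences of a concave function are dominated. -/
lemma shift_diff_le (V : ℕ → ℝ)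
    (hconc : ∀ x : ℕ, V (x + 2) - V (x + 1) ≤ V (x + 1) - V x)
    (k : ℕ) : ∀ a b : ℕ, a ≤ b → V (b + k) - V (a + k) ≤ V b - V a := by
  intro a b hab
  induction b, hab using Nat.le_induction with
  | base => simp
  | succ n hn ih =>
    have h1 : V (n + k + 1) - V (n + k) ≤ V (n + 1) - V n :=
      incr_antitone V hconc n (n + k) (Nat.le_add_right n k)
    have : n + 1 + k = n + k + 1 := by ring
    rw [this]
    linarith

/-- Key inequality for the threshold structure: differences of the state-action value `Q`
are dominated by differences of the value function `V`. -/
theorem Q_diff_le_V_diff (V : ℕ → ℝ) (L : ℕ) (hL : 0 < L)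
    (p ε : ℝ) (hp0 : 0 < p) (hp1 : p ≤ 1) (hε0 : 0 < ε) (hεL : ε ≤ (L : ℝ)) (r : ℕ)
    (hconc : ∀ x : ℕ, V (x + 2) - V (x + 1) ≤ V (x + 1) - V x)
    (hslope : ∀ Δ₁ Δ₂ : ℕ, Δ₁ ≤ Δ₂ →
      V Δ₂ - V Δ₁ ≥ ((L : ℝ) / (ε * p)) * ((Δ₂ : ℝ) - (Δ₁ : ℝ))) :
    ∀ Δ₁ Δ₂ : ℕ, Δ₁ ≤ Δ₂ →
      (((Δ₂ : ℝ) + ((L : ℝ) - 1) / 2 + (ε / L) * p * V r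
          + (ε / L) * (1 - p) * V (Δ₂ + L) + (1 - ε / L) * V Δ₂)
        - ((Δ₁ : ℝ) + ((L : ℝ) - 1) / 2 + (ε / L) * p * V r
          + (ε / L) * (1 - p) * V (Δ₁ + L) + (1 - ε / L) * V Δ₁))
        ≤ V Δ₂ - V Δ₁ := by
  intro Δ₁ Δ₂ h12
  have hLpos : (0 : ℝ) < L := by exact_mod_cast hL
  set A : ℝ := V Δ₂ - V Δ₁ with hA
  set B : ℝ := V (Δ₂ + L) - V (Δ₁ + L) with hB
  have hBA : B ≤ A := shift_diff_le V hconc L Δ₁ Δ₂ h12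
  have hslope' := hslope Δ₁ Δ₂ h12
  have hd : (Δ₁ : ℝ) ≤ (Δ₂ : ℝ) := by exact_mod_cast h12
  -- multiply slope bound by ε*p/L > 0
  have hεp : 0 < ε * p := mul_pos hε0 hp0
  have hkey : ((Δ₂ : ℝ) - Δ₁) ≤ (ε * p / L) * A := by
    have := mul_le_mul_of_nonneg_left hslope' (le_of_lt (by positivity : (0:ℝ) < ε * p / L))
    have hcalc : (ε * p / L) * (((L : ℝ) / (ε * p)) * ((Δ₂ : ℝ) - Δ₁)) = (Δ₂ : ℝ) - Δ₁ := by
      field_simp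
    linarith [this, hcalc ▸ this]
  have h1p : (0 : ℝ) ≤ 1 - p := by linarith
  have hεLpos : (0 : ℝ) < ε / L := by positivity
  have hmul : (ε / L) * (1 - p) * B ≤ (ε / L) * (1 - p) * A :=
    mul_le_mul_of_nonneg_left hBA (by positivity)
  have : (ε / L) * (1 - p) * A + (ε * p / L) * A = (ε / L) * A := by ring
  nlinarith [hmul, hkey]
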